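/- Let $x_0 \in (a_{2j_0}, a_{2j_0+1})$ lie in a gap of $E = \bigcup_{k=1}^l [a_{2k-1},a_{2k}]$, where $a_1 < \dots < a_{2l}$ and $H(x) = \prod_j (x - a_j)$. Then there exists a unique real polynomial $r_{x_0}$ of degree at most $l-1$ such that $r_{x_0}(x_0) = -\sqrt{H(x_0)}$ and $\mathrm{p.v.} \int_{a_{2j}}^{a_{2j+1}} \frac{r_{x_0}(\xi)}{\xi - x_0} \frac{d\xi}{\sqrt{H(\xi)}} = 0$ for $j = 1, \dots, l-1$ (the integral over the gap containing $x_0$ taken as a Cauchy principal value). -/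

import Mathlib

open Polynomial Set Filter intervalIntegral

set_option linter.unusedSectionVars false
set_option linter.unusedVariables false
set_option maxHeartbeats 1000000

section Aux
open MeasureTheory

namespace RX0
noncomputable section


def Hf (l : ℕ) (a : ℕ → ℝ) (ξ : ℝ) : ℝ := ∏ i ∈ Finset.Icc 1 (2 * l), (ξ - a i)

lemma Hf_cont (l : ℕ) (a : ℕ → ℝ) : Continuous (Hf l a) := by
  unfold Hf
  exact continuous_finset_prod _ (fun i _ => continuous_id.sub continuous_const)

lemma prod_pair (l : ℕ) (f : ℕ → ℝ) :
    ∏ i ∈ Finset.Icc 1 (2 * l), f i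
      = ∏ k ∈ Finset.range l, (f (2 * k + 1) * f (2 * k + 2)) := by
  induction l with
  | zero => simp
  | succ n ih =>
    have h2 : 2 * (n + 1) = (2 * n + 1) + 1 := by ring
    rw [h2, Finset.prod_Icc_succ_top (by omega), Finset.prod_Icc_succ_top (by omega),
      Finset.prod_range_succ, ← ih]
    ring

lemma a_mono (l : ℕ) (a : ℕ → ℝ)
    (ha : ∀ i, 1 ≤ i → i < 2 * l → a i < a (i + 1)) :
    ∀ i i', 1 ≤ i → i ≤ i' → i' ≤ 2 * l → a i ≤ a i' := by
  intro i i' h1 hii' hi'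
  induction i' with
  | zero => omega
  | succ n ihn =>
    rcases Nat.lt_or_ge i (n+1) with h | h
    · have h3 : a n ≤ a (n+1) := by
        rcases Nat.eq_zero_or_pos n with rfl | hn
        · omega
        · exact (ha n hn (by omega)).le
      exact le_trans (ihn (by omega) (by omega)) h3
    · have : i = n + 1 := by omega
      subst this; rfl

lemma a_strict (l : ℕ) (a : ℕ → ℝ)
    (ha : ∀ i, 1 ≤ i → i < 2 * l → a i < a (i + 1)) :
    ∀ i i', 1 ≤ i → i < i' → i' ≤ 2 * l → a i < a i' := by
  intro i i' h1 hii' hi'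
  have h2 : a i < a (i+1) := ha i h1 (by omega)
  exact lt_of_lt_of_le h2 (a_mono l a ha (i+1) i' (by omega) (by omega) hi')

/-- positivity of H in a gap -/
lemma Hf_pos (l : ℕ) (a : ℕ → ℝ)
    (ha : ∀ i, 1 ≤ i → i < 2 * l → a i < a (i + 1))
    (j : ℕ) (hj1 : 1 ≤ j) (hj2 : j ≤ l - 1) (hl : 1 ≤ l)
    {ξ : ℝ} (hξ : ξ ∈ Set.Ioo (a (2 * j)) (a (2 * j + 1))) :
    0 < Hf l a ξ := by
  obtain ⟨hξ1, hξ2⟩ := hξ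
  rw [Hf, prod_pair]
  apply Finset.prod_pos
  intro k hk
  rw [Finset.mem_range] at hk
  rcases Nat.lt_or_ge k j with h | h
  · -- both factors positive
    have h1 : a (2 * k + 1) ≤ a (2 * j) :=
      a_mono l a ha _ _ (by omega) (by omega) (by omega)
    have h2 : a (2 * k + 2) ≤ a (2 * j) :=
      a_mono l a ha _ _ (by omega) (by omega) (by omega)
    have hp1 := lt_of_le_of_lt h1 hξ1
    have hp2 := lt_of_le_of_lt h2 hξ1
    exact mul_pos (by linarith) (by linarith)
  · -- both factors negative
    have h1 : a (2 * j + 1) ≤ a (2 * k + 1) :=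
      a_mono l a ha _ _ (by omega) (by omega) (by omega)
    have h2 : a (2 * j + 1) ≤ a (2 * k + 2) :=
      a_mono l a ha _ _ (by omega) (by omega) (by omega)
    have hn1 : ξ - a (2 * k + 1) < 0 := by linarith
    have hn2 : ξ - a (2 * k + 2) < 0 := by linarith
    exact mul_pos_of_neg_of_neg hn1 hn2

/-- the quadratic lower bound on a gap -/
lemma Hf_lower (l : ℕ) (a : ℕ → ℝ)
    (ha : ∀ i, 1 ≤ i → i < 2 * l → a i < a (i + 1))
    (j : ℕ) (hj1 : 1 ≤ j) (hj2 : j ≤ l - 1) (hl : 1 ≤ l) :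
    ∃ M > 0, ∀ ξ ∈ Set.Icc (a (2 * j)) (a (2 * j + 1)),
      M * ((ξ - a (2 * j)) * (a (2 * j + 1) - ξ)) ≤ Hf l a ξ := by
  set c := a (2 * j)
  set d := a (2 * j + 1)
  have hcd : c < d := ha (2 * j) (by omega) (by omega)
  set s : Finset ℕ := ((Finset.Icc 1 (2 * l)).erase (2 * j)).erase (2 * j + 1) with hs
  set P : ℝ → ℝ := fun ξ => ∏ i ∈ s, (ξ - a i) with hP
  have hPc : Continuous P := continuous_finset_prod _ (fun i _ => continuous_id.sub continuous_const)
  have hsplit : ∀ ξ, Hf l a ξ = (ξ - c) * ((ξ - d) * P ξ) := by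
    intro ξ
    have h1 : (2 * j) ∈ Finset.Icc 1 (2 * l) := by
      rw [Finset.mem_Icc]; omega
    have h2 : (2 * j + 1) ∈ (Finset.Icc 1 (2 * l)).erase (2 * j) := by
      rw [Finset.mem_erase, Finset.mem_Icc]; omega
    rw [Hf, ← Finset.mul_prod_erase _ _ h1, ← Finset.mul_prod_erase _ _ h2]
  -- P has no zero on [c,d]
  have hPne : ∀ ξ ∈ Set.Icc c d, P ξ ≠ 0 := by
    intro ξ hξ
    rw [hP]
    rw [Finset.prod_ne_zero_iff]
    intro i hi
    rw [hs, Finset.mem_erase, Finset.mem_erase, Finset.mem_Icc] at hi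
    obtain ⟨hi1, hi2, hi3, hi4⟩ := hi
    rcases Nat.lt_or_ge i (2 * j) with h | h
    · have : a i < a (2 * j) := a_strict l a ha _ _ (by omega) (by omega) (by omega)
      have := hξ.1
      intro hcon
      simp only [sub_eq_zero] at hcon
      subst hcon
      simp only [c] at this ⊢
      linarith
    · have hih : 2 * j + 2 ≤ i := by omega
      have : a (2 * j + 1) < a i := a_strict l a ha _ _ (by omega) (by omega) (by omega)
      have := hξ.2
      intro hcon
      simp only [sub_eq_zero] at hcon
      subst hcon
      simp only [d] at this
      linarith
  -- P is negative at the midpoint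
  set m := (c + d) / 2 with hm
  have hmIoo : m ∈ Set.Ioo c d := ⟨by simp [hm]; linarith, by simp [hm]; linarith⟩
  have hHm : 0 < Hf l a m := Hf_pos l a ha j hj1 hj2 hl hmIoo
  have hPm : P m < 0 := by
    have h1 : m - c > 0 := by linarith [hmIoo.1]
    have h2 : m - d < 0 := by linarith [hmIoo.2]
    rw [hsplit m] at hHm
    by_contra hge
    push_neg at hge
    have t1 : (m - d) * P m ≤ 0 := mul_nonpos_of_nonpos_of_nonneg h2.le hge
    have t2 : (m - c) * ((m - d) * P m) ≤ 0 := mul_nonpos_of_nonneg_of_nonpos h1.le t1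
    linarith
  -- P is negative on all of [c,d]
  have hPneg : ∀ ξ ∈ Set.Icc c d, P ξ < 0 := by
    intro ξ hξ
    by_contra hcon
    push_neg at hcon
    have hpos : 0 < P ξ := lt_of_le_of_ne hcon (Ne.symm (hPne ξ hξ))
    have hsub : Set.uIcc ξ m ⊆ Set.Icc c d :=
      Set.uIcc_subset_Icc hξ (Set.mem_Icc_of_Ioo hmIoo)
    have : (0 : ℝ) ∈ Set.uIcc (P ξ) (P m) := by
      rw [Set.mem_uIcc]
      right; exact ⟨hPm.le, hpos.le⟩
    have := intermediate_value_uIcc (hPc.continuousOn (s := Set.uIcc ξ m)) this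
    obtain ⟨z, hz, hz0⟩ := this
    exact hPne z (hsub hz) hz0
  -- max of P on [c,d]
  obtain ⟨ξm, hξm, hmax⟩ := isCompact_Icc.exists_isMaxOn (Set.nonempty_Icc.mpr hcd.le)
    hPc.continuousOn
  refine ⟨-P ξm, by linarith [hPneg ξm hξm], ?_⟩
  intro ξ hξ
  have h1 : P ξ ≤ P ξm := hmax hξ
  have h2 : 0 ≤ (ξ - c) * (d - ξ) := by
    have := hξ.1; have := hξ.2
    apply mul_nonneg <;> linarith
  rw [hsplit]
  nlinarith



lemma rpow_integrable_shift (c p q : ℝ) :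
    IntervalIntegrable (fun x => (x - c) ^ (-(2⁻¹ : ℝ))) MeasureTheory.volume p q := by
  have h := intervalIntegral.intervalIntegrable_rpow' (a := p - c) (b := q - c)
    (r := -(2⁻¹ : ℝ)) (by norm_num)
  have h2 := h.comp_sub_right c
  convert h2 using 2 <;> ring

lemma inv_sqrt_eq (x : ℝ) (hx : 0 ≤ x) : x ^ (-(2⁻¹ : ℝ)) = 1 / Real.sqrt x := by
  rw [Real.sqrt_eq_rpow, Real.rpow_neg hx, one_div]
  norm_num

/-- integrability with inverse-sqrt edge singularities -/
lemma integrable_edge (c d : ℝ) (hcd : c < d) (f : ℝ → ℝ) (hm : Measurable f)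
    (C : ℝ) (hb : ∀ ξ ∈ Set.Ioo c d, |f ξ| ≤ C / (Real.sqrt (ξ - c) * Real.sqrt (d - ξ))) :
    IntervalIntegrable f MeasureTheory.volume c d := by
  set m := (c + d) / 2 with hmdef
  have hcm : c < m := by rw [hmdef]; linarith
  have hmd : m < d := by rw [hmdef]; linarith
  have hC0 : 0 ≤ max C 0 := le_max_right _ _
  -- left piece
  have left : IntervalIntegrable f MeasureTheory.volume c m := by
    set C1 := max C 0 / Real.sqrt (d - m) with hC1
    have hC1nn : 0 ≤ C1 := div_nonneg hC0 (Real.sqrt_nonneg _)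
    have hmaj : IntervalIntegrable (fun ξ => C1 * (ξ - c) ^ (-(2⁻¹ : ℝ)))
        MeasureTheory.volume c m := (rpow_integrable_shift c c m).const_mul C1
    apply hmaj.mono_fun' (hm.aestronglyMeasurable.restrict)
    rw [Set.uIoc_of_le hcm.le]
    filter_upwards [MeasureTheory.ae_restrict_mem measurableSet_Ioc] with ξ hξ
    have hξc : c < ξ := hξ.1
    have hξd : ξ < d := lt_of_le_of_lt hξ.2 hmd
    have h1 : |f ξ| ≤ C / (Real.sqrt (ξ - c) * Real.sqrt (d - ξ)) := hb ξ ⟨hξc, hξd⟩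
    have hsc : 0 < Real.sqrt (ξ - c) := Real.sqrt_pos.mpr (by linarith)
    have hsd : 0 < Real.sqrt (d - ξ) := Real.sqrt_pos.mpr (by linarith)
    have hsm : 0 < Real.sqrt (d - m) := Real.sqrt_pos.mpr (by linarith)
    have hmono : Real.sqrt (d - m) ≤ Real.sqrt (d - ξ) := Real.sqrt_le_sqrt (by linarith [hξ.2])
    have h2 : C / (Real.sqrt (ξ - c) * Real.sqrt (d - ξ))
        ≤ max C 0 / (Real.sqrt (ξ - c) * Real.sqrt (d - m)) := by
      apply div_le_div₀ (by positivity) (le_max_left _ _) (by positivity)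
      exact mul_le_mul_of_nonneg_left hmono hsc.le
    have h3 : max C 0 / (Real.sqrt (ξ - c) * Real.sqrt (d - m))
        = C1 * (ξ - c) ^ (-(2⁻¹ : ℝ)) := by
      rw [inv_sqrt_eq _ (by linarith : (0:ℝ) ≤ ξ - c), hC1,
        mul_comm (Real.sqrt (ξ - c)), ← div_div, mul_one_div]
    calc ‖f ξ‖ = |f ξ| := rfl
      _ ≤ _ := h1
      _ ≤ _ := h2
      _ = _ := h3
  -- right piece
  have right : IntervalIntegrable f MeasureTheory.volume m d := by
    set C1 := max C 0 / Real.sqrt (m - c) with hC1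
    have hmaj : IntervalIntegrable (fun ξ => C1 * (d - ξ) ^ (-(2⁻¹ : ℝ)))
        MeasureTheory.volume m d := by
      have h := (rpow_integrable_shift (-d) (-d) (-m)).const_mul C1
      have h2 := (IntervalIntegrable.iff_comp_neg enorm_ne_top).mp h
      have h3 : (fun ξ => C1 * (-ξ - -d) ^ (-(2⁻¹ : ℝ))) = fun ξ => C1 * (d - ξ) ^ (-(2⁻¹ : ℝ)) := by
        funext ξ; ring_nf
      rw [h3] at h2
      simp only [neg_neg] at h2
      exact h2.symm
    apply hmaj.mono_fun' (hm.aestronglyMeasurable.restrict)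
    rw [Set.uIoc_of_le hmd.le]
    have hned : ∀ᵐ ξ ∂(MeasureTheory.volume.restrict (Set.Ioc m d)), ξ ≠ d := by
      apply MeasureTheory.ae_restrict_of_ae
      rw [MeasureTheory.ae_iff]
      have : {ξ : ℝ | ¬ ξ ≠ d} = {d} := by ext x; simp
      rw [this]
      exact Real.volume_singleton
    filter_upwards [MeasureTheory.ae_restrict_mem measurableSet_Ioc, hned] with ξ hξ hne
    have hξc : c < ξ := lt_trans hcm hξ.1
    have hξd' : ξ < d := lt_of_le_of_ne hξ.2 hne
    · have h1 : |f ξ| ≤ C / (Real.sqrt (ξ - c) * Real.sqrt (d - ξ)) := hb ξ ⟨hξc, hξd'⟩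
      have hsc : 0 < Real.sqrt (ξ - c) := Real.sqrt_pos.mpr (by linarith)
      have hsd : 0 < Real.sqrt (d - ξ) := Real.sqrt_pos.mpr (by linarith)
      have hsm : 0 < Real.sqrt (m - c) := Real.sqrt_pos.mpr (by linarith)
      have hmono : Real.sqrt (m - c) ≤ Real.sqrt (ξ - c) := Real.sqrt_le_sqrt (by linarith [hξ.1])
      have h2 : C / (Real.sqrt (ξ - c) * Real.sqrt (d - ξ))
          ≤ max C 0 / (Real.sqrt (m - c) * Real.sqrt (d - ξ)) := by
        apply div_le_div₀ (by positivity) (le_max_left _ _) (by positivity)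
        exact mul_le_mul_of_nonneg_right hmono hsd.le
      have h3 : max C 0 / (Real.sqrt (m - c) * Real.sqrt (d - ξ))
          = C1 * (d - ξ) ^ (-(2⁻¹ : ℝ)) := by
        rw [inv_sqrt_eq _ (by linarith : (0:ℝ) ≤ d - ξ), hC1,
          ← div_div, mul_one_div]
      calc ‖f ξ‖ = |f ξ| := rfl
        _ ≤ _ := h1
        _ ≤ _ := h2
        _ = _ := h3
  exact left.trans right




/-- main integrability lemma on a gap -/
lemma intH (l : ℕ) (a : ℕ → ℝ)
    (ha : ∀ i, 1 ≤ i → i < 2 * l → a i < a (i + 1))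
    (j : ℕ) (hj1 : 1 ≤ j) (hj2 : j ≤ l - 1) (hl : 1 ≤ l)
    (f : ℝ → ℝ) (hm : Measurable f) (K : ℝ)
    (hK : ∀ ξ ∈ Set.Ioo (a (2 * j)) (a (2 * j + 1)), |f ξ| ≤ K / Real.sqrt (Hf l a ξ)) :
    IntervalIntegrable f MeasureTheory.volume (a (2 * j)) (a (2 * j + 1)) := by
  obtain ⟨M, hM, hlow⟩ := Hf_lower l a ha j hj1 hj2 hl
  set c := a (2 * j) with hc
  set d := a (2 * j + 1) with hd
  have hcd : c < d := ha (2 * j) (by omega) (by omega)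
  apply integrable_edge c d hcd f hm (max K 0 / Real.sqrt M)
  intro ξ hξ
  have h1 : 0 < (ξ - c) * (d - ξ) := mul_pos (by linarith [hξ.1]) (by linarith [hξ.2])
  have h2 : M * ((ξ - c) * (d - ξ)) ≤ Hf l a ξ := hlow ξ (Set.mem_Icc_of_Ioo hξ)
  have hHpos : 0 < Hf l a ξ := lt_of_lt_of_le (by positivity) h2
  have hsH : 0 < Real.sqrt (Hf l a ξ) := Real.sqrt_pos.mpr hHpos
  have hsqle : Real.sqrt M * (Real.sqrt (ξ - c) * Real.sqrt (d - ξ)) ≤ Real.sqrt (Hf l a ξ) := by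
    rw [← Real.sqrt_mul (by linarith [hξ.1] : (0:ℝ) ≤ ξ - c) (d - ξ),
      ← Real.sqrt_mul hM.le]
    exact Real.sqrt_le_sqrt h2
  have hsqpos : 0 < Real.sqrt M * (Real.sqrt (ξ - c) * Real.sqrt (d - ξ)) := by
    have := Real.sqrt_pos.mpr hM
    have := Real.sqrt_pos.mpr (show (0:ℝ) < ξ - c by linarith [hξ.1])
    have := Real.sqrt_pos.mpr (show (0:ℝ) < d - ξ by linarith [hξ.2])
    positivity
  calc |f ξ| ≤ K / Real.sqrt (Hf l a ξ) := hK ξ hξ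
    _ ≤ max K 0 / Real.sqrt (Hf l a ξ) := by
        apply div_le_div_of_nonneg_right (le_max_left _ _) hsH.le
    _ ≤ max K 0 / (Real.sqrt M * (Real.sqrt (ξ - c) * Real.sqrt (d - ξ))) := by
        apply div_le_div_of_nonneg_left (le_max_right _ _) hsqpos hsqle
    _ = max K 0 / Real.sqrt M / (Real.sqrt (ξ - c) * Real.sqrt (d - ξ)) := by
        rw [div_div]





lemma Hf_measurable (l : ℕ) (a : ℕ → ℝ) : Measurable (Hf l a) := (Hf_cont l a).measurable

/-- the integrand -/
def fr (l : ℕ) (a : ℕ → ℝ) (x0 : ℝ) (r : Polynomial ℝ) (ξ : ℝ) : ℝ :=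
  r.eval ξ / (ξ - x0) / Real.sqrt (Hf l a ξ)

lemma fr_measurable (l : ℕ) (a : ℕ → ℝ) (x0 : ℝ) (r : Polynomial ℝ) :
    Measurable (fr l a x0 r) := by
  apply Measurable.div
  · exact (Polynomial.continuous r).measurable.div
      ((continuous_id.sub continuous_const).measurable)
  · exact (Real.continuous_sqrt.comp (Hf_cont l a)).measurable

lemma fr_add (l : ℕ) (a : ℕ → ℝ) (x0 : ℝ) (r s : Polynomial ℝ) (ξ : ℝ) :
    fr l a x0 (r + s) ξ = fr l a x0 r ξ + fr l a x0 s ξ := by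
  unfold fr
  rw [Polynomial.eval_add, add_div, add_div]

lemma fr_smul (l : ℕ) (a : ℕ → ℝ) (x0 : ℝ) (k : ℝ) (r : Polynomial ℝ) (ξ : ℝ) :
    fr l a x0 (k • r) ξ = k * fr l a x0 r ξ := by
  unfold fr
  rw [Polynomial.eval_smul, smul_eq_mul, mul_div_assoc, mul_div_assoc]

section PV

variable (l : ℕ) (a : ℕ → ℝ) (j0 : ℕ) (x0 : ℝ)

def bb : ℝ := 1 / Real.sqrt (Hf l a x0)

def vv : ℝ → ℝ := fun ξ => (1 / Real.sqrt (Hf l a ξ) - bb l a x0) / (ξ - x0)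

def HP : Polynomial ℝ := ∏ i ∈ Finset.Icc 1 (2 * l), (X - Polynomial.C (a i))

def Gq : Polynomial ℝ := (HP l a - Polynomial.C (Hf l a x0)) /ₘ (X - Polynomial.C x0)

def qr (r : Polynomial ℝ) : Polynomial ℝ := r /ₘ (X - Polynomial.C x0)

def gg (r : Polynomial ℝ) : ℝ → ℝ :=
  fun ξ => (qr x0 r).eval ξ / Real.sqrt (Hf l a ξ) + r.eval x0 * vv l a x0 ξ

def L0 : ℝ := Real.log ((a (2 * j0 + 1) - x0) / (x0 - a (2 * j0)))

def Phi (r : Polynomial ℝ) : ℝ :=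
  (∫ ξ in (a (2 * j0))..(a (2 * j0 + 1)), gg l a x0 r ξ)
    + r.eval x0 * bb l a x0 * L0 a j0 x0

def Ff (r : Polynomial ℝ) : ℝ → ℝ := fun ε =>
  (∫ ξ in (a (2 * j0))..(x0 - ε), fr l a x0 r ξ)
    + ∫ ξ in (x0 + ε)..(a (2 * j0 + 1)), fr l a x0 r ξ

lemma HP_eval (ξ : ℝ) : (HP l a).eval ξ = Hf l a ξ := by
  unfold HP Hf
  rw [Polynomial.eval_prod]
  simp

lemma Gq_eval (ξ : ℝ) : Hf l a ξ - Hf l a x0 = (ξ - x0) * (Gq l a x0).eval ξ := by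
  have hmonic : (X - Polynomial.C x0).Monic := Polynomial.monic_X_sub_C x0
  have hmod : (HP l a - Polynomial.C (Hf l a x0)) %ₘ (X - Polynomial.C x0) = 0 := by
    rw [Polynomial.modByMonic_X_sub_C_eq_C_eval]
    rw [Polynomial.eval_sub, HP_eval, Polynomial.eval_C, sub_self, map_zero]
  have h := Polynomial.modByMonic_add_div (HP l a - Polynomial.C (Hf l a x0)) (X - Polynomial.C x0)
  rw [hmod, zero_add] at h
  have := congrArg (Polynomial.eval ξ) h
  rw [Polynomial.eval_mul, Polynomial.eval_sub, Polynomial.eval_sub, Polynomial.eval_X,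
    Polynomial.eval_C, HP_eval, Polynomial.eval_C] at this
  rw [← this]
  rfl

lemma qr_eval (r : Polynomial ℝ) (ξ : ℝ) :
    r.eval ξ = (ξ - x0) * (qr x0 r).eval ξ + r.eval x0 := by
  have hmonic : (X - Polynomial.C x0).Monic := Polynomial.monic_X_sub_C x0
  have h := Polynomial.modByMonic_add_div r (X - Polynomial.C x0)
  rw [Polynomial.modByMonic_X_sub_C_eq_C_eval] at h
  have := congrArg (Polynomial.eval ξ) h
  rw [Polynomial.eval_add, Polynomial.eval_mul, Polynomial.eval_sub, Polynomial.eval_X,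
    Polynomial.eval_C, Polynomial.eval_C] at this
  rw [← this]
  unfold qr
  ring

/-- algebraic decomposition -/
lemma alg_decomp (u s Q e b : ℝ) (hu : u ≠ 0) :
    (u * Q + e) / u / s = Q / s + e * ((1 / s - b) / u) + e * b * (1 / u) := by
  rcases eq_or_ne s 0 with rfl | hs
  · simp only [div_zero, zero_div, zero_sub, zero_add]
    field_simp
    ring
  · field_simp
    ring

lemma fr_decomp (r : Polynomial ℝ) (ξ : ℝ) (hξ : ξ ≠ x0) :
    fr l a x0 r ξ = gg l a x0 r ξ + (r.eval x0 * bb l a x0) * (1 / (ξ - x0)) := by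
  have hu : ξ - x0 ≠ 0 := sub_ne_zero.mpr hξ
  unfold fr gg vv bb
  rw [qr_eval x0 r ξ]
  have := alg_decomp (ξ - x0) (Real.sqrt (Hf l a ξ)) ((qr x0 r).eval ξ) (r.eval x0)
    (1 / Real.sqrt (Hf l a x0)) hu
  rw [this]


variable (ha : ∀ i, 1 ≤ i → i < 2 * l → a i < a (i + 1)) (hl : 1 ≤ l)
    (hj01 : 1 ≤ j0) (hj02 : j0 ≤ l - 1)
    (hx0 : x0 ∈ Set.Ioo (a (2 * j0)) (a (2 * j0 + 1)))

include ha hl hj01 hj02 hx0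

omit ha hl hj01 hj02 hx0 in
lemma vv_measurable : Measurable (vv l a x0) := by
  unfold vv
  exact ((measurable_const.div ((Real.continuous_sqrt.comp (Hf_cont l a)).measurable)).sub
    measurable_const).div ((continuous_id.sub continuous_const).measurable)

lemma vv_bound : ∃ K, ∀ ξ ∈ Set.Ioo (a (2 * j0)) (a (2 * j0 + 1)),
    |vv l a x0 ξ| ≤ K / Real.sqrt (Hf l a ξ) := by
  have hcd : a (2 * j0) < a (2 * j0 + 1) := ha (2 * j0) (by omega) (by omega)
  obtain ⟨KG, hKG⟩ := (isCompact_Icc (a := a (2 * j0)) (b := a (2 * j0 + 1))).exists_bound_of_continuousOn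
    (f := fun ξ => (Gq l a x0).eval ξ) (Polynomial.continuous _).continuousOn
  have hKG0 : 0 ≤ KG := le_trans (norm_nonneg _)
    (hKG (a (2 * j0)) (Set.left_mem_Icc.mpr hcd.le))
  have hH0 : 0 < Hf l a x0 := Hf_pos l a ha j0 hj01 hj02 hl hx0
  have hs0 : 0 < Real.sqrt (Hf l a x0) := Real.sqrt_pos.mpr hH0
  refine ⟨KG / Hf l a x0, ?_⟩
  intro ξ hξ
  have hHξ : 0 < Hf l a ξ := Hf_pos l a ha j0 hj01 hj02 hl hξ
  have hsξ : 0 < Real.sqrt (Hf l a ξ) := Real.sqrt_pos.mpr hHξ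
  rcases eq_or_ne ξ x0 with rfl | hne
  · have : vv l a ξ ξ = 0 := by
      unfold vv bb
      simp
    rw [this, abs_zero]
    positivity
  · have hu : ξ - x0 ≠ 0 := sub_ne_zero.mpr hne
    set s1 := Real.sqrt (Hf l a ξ) with hs1def
    set s2 := Real.sqrt (Hf l a x0) with hs2def
    have hsum : 0 < s2 + s1 := by positivity
    have t1 : Real.sqrt (Hf l a x0) * Real.sqrt (Hf l a x0) = Hf l a x0 :=
      Real.mul_self_sqrt hH0.le
    have t2 : Real.sqrt (Hf l a ξ) * Real.sqrt (Hf l a ξ) = Hf l a ξ :=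
      Real.mul_self_sqrt hHξ.le
    have e1 : Hf l a x0 - Hf l a ξ = (s2 - s1) * (s2 + s1) := by
      rw [hs1def, hs2def]
      linear_combination t2 - t1
    have e2 : s2 - s1 = (Hf l a x0 - Hf l a ξ) / (s2 + s1) := by
      rw [eq_div_iff hsum.ne', e1]
    have e3 : 1 / s1 - 1 / s2 = (s2 - s1) / (s1 * s2) := by
      field_simp
    have e4 : vv l a x0 ξ = -((Gq l a x0).eval ξ) / (s1 * s2 * (s2 + s1)) := by
      unfold vv bb
      rw [← hs1def, ← hs2def, e3, e2, div_div, div_div]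
      have e5 : Hf l a x0 - Hf l a ξ = -((ξ - x0) * (Gq l a x0).eval ξ) := by
        rw [← Gq_eval l a x0 ξ]; ring
      rw [e5]
      rw [show (s2 + s1) * (s1 * s2 * (ξ - x0)) = (ξ - x0) * (s1 * s2 * (s2 + s1)) by ring,
        show -((ξ - x0) * (Gq l a x0).eval ξ) = (ξ - x0) * (-(Gq l a x0).eval ξ) by ring,
        mul_div_mul_left _ _ hu, neg_div]
  -- now the bound
    rw [e4, abs_div]
    have habs : |s1 * s2 * (s2 + s1)| = s1 * s2 * (s2 + s1) := by
      apply abs_of_pos; positivity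
    rw [habs]
    have hGb : |-((Gq l a x0).eval ξ)| ≤ KG := by
      rw [abs_neg]
      exact hKG ξ (Set.mem_Icc_of_Ioo hξ)
    have hden : Hf l a x0 * s1 ≤ s1 * s2 * (s2 + s1) := by
      have h1 : s2 * s2 = Hf l a x0 := Real.mul_self_sqrt hH0.le
      nlinarith [hsξ, hs0]
    calc |-((Gq l a x0).eval ξ)| / (s1 * s2 * (s2 + s1))
        ≤ KG / (Hf l a x0 * s1) := by
          apply div_le_div₀ hKG0 hGb (by positivity) hden
      _ = KG / Hf l a x0 / s1 := by rw [div_div]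

lemma vv_int : IntervalIntegrable (vv l a x0) MeasureTheory.volume
    (a (2 * j0)) (a (2 * j0 + 1)) := by
  obtain ⟨K, hK⟩ := vv_bound l a j0 x0 ha hl hj01 hj02 hx0
  exact intH l a ha j0 hj01 hj02 hl _ (vv_measurable l a x0) K hK

lemma gg_int (r : Polynomial ℝ) : IntervalIntegrable (gg l a x0 r) MeasureTheory.volume
    (a (2 * j0)) (a (2 * j0 + 1)) := by
  have hcd : a (2 * j0) < a (2 * j0 + 1) := ha (2 * j0) (by omega) (by omega)
  have part1 : IntervalIntegrable (fun ξ => (qr x0 r).eval ξ / Real.sqrt (Hf l a ξ))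
      MeasureTheory.volume (a (2 * j0)) (a (2 * j0 + 1)) := by
    obtain ⟨Kq, hKq⟩ := (isCompact_Icc (a := a (2 * j0)) (b := a (2 * j0 + 1))).exists_bound_of_continuousOn
      (f := fun ξ => (qr x0 r).eval ξ) (Polynomial.continuous _).continuousOn
    apply intH l a ha j0 hj01 hj02 hl _ ?_ Kq
    · intro ξ hξ
      rw [abs_div, abs_of_nonneg (Real.sqrt_nonneg _)]
      apply div_le_div_of_nonneg_right (hKq ξ (Set.mem_Icc_of_Ioo hξ)) (Real.sqrt_nonneg _)
    · exact (Polynomial.continuous _).measurable.div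
        ((Real.continuous_sqrt.comp (Hf_cont l a)).measurable)
  exact part1.add ((vv_int l a j0 x0 ha hl hj01 hj02 hx0).const_mul (r.eval x0))

omit ha hl hj01 hj02 hx0 in
lemma oneDiv_int_left (k : ℝ) (ε : ℝ) (hε : 0 < ε) (hε2 : ε < x0 - a (2 * j0)) :
    IntervalIntegrable (fun ξ => k * (1 / (ξ - x0))) MeasureTheory.volume (a (2 * j0)) (x0 - ε)
    ∧ ∫ ξ in (a (2 * j0))..(x0 - ε), 1 / (ξ - x0) = Real.log (ε / (x0 - a (2 * j0))) := by
  have hc : a (2 * j0) < x0 - ε := by linarith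
  constructor
  · apply ContinuousOn.intervalIntegrable
    apply continuousOn_const.mul
    apply continuousOn_const.div (continuousOn_id.sub continuousOn_const)
    intro ξ hξ
    rw [Set.uIcc_of_le hc.le] at hξ
    have : ξ ≤ x0 - ε := hξ.2
    show ξ - x0 ≠ 0
    intro hcon
    rw [sub_eq_zero] at hcon
    subst hcon
    linarith
  · have h1 : (∫ ξ in (a (2 * j0))..(x0 - ε), 1 / (ξ - x0))
        = ∫ ξ in (a (2 * j0) - x0)..(x0 - ε - x0), 1 / ξ :=
      intervalIntegral.integral_comp_sub_right (fun x => 1 / x) x0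
    rw [h1]
    have h2 : x0 - ε - x0 = -ε := by ring
    rw [h2]
    rw [integral_one_div]
    · rw [show a (2 * j0) - x0 = -(x0 - a (2 * j0)) by ring, neg_div_neg_eq]
    · intro hmem
      rw [Set.mem_uIcc] at hmem
      rcases hmem with ⟨_, h⟩ | ⟨h, _⟩
      · linarith
      · linarith

omit ha hl hj01 hj02 hx0 in
lemma oneDiv_int_right (k : ℝ) (ε : ℝ) (hε : 0 < ε) (hε2 : ε < a (2 * j0 + 1) - x0) :
    IntervalIntegrable (fun ξ => k * (1 / (ξ - x0))) MeasureTheory.volume (x0 + ε) (a (2 * j0 + 1))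
    ∧ ∫ ξ in (x0 + ε)..(a (2 * j0 + 1)), 1 / (ξ - x0)
      = Real.log ((a (2 * j0 + 1) - x0) / ε) := by
  have hc : x0 + ε < a (2 * j0 + 1) := by linarith
  constructor
  · apply ContinuousOn.intervalIntegrable
    apply continuousOn_const.mul
    apply continuousOn_const.div (continuousOn_id.sub continuousOn_const)
    intro ξ hξ
    rw [Set.uIcc_of_le hc.le] at hξ
    have : x0 + ε ≤ ξ := hξ.1
    show ξ - x0 ≠ 0
    intro hcon
    rw [sub_eq_zero] at hcon
    subst hcon
    linarith
  · have h1 : (∫ ξ in (x0 + ε)..(a (2 * j0 + 1)), 1 / (ξ - x0))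
        = ∫ ξ in (x0 + ε - x0)..(a (2 * j0 + 1) - x0), 1 / ξ :=
      intervalIntegral.integral_comp_sub_right (fun x => 1 / x) x0
    rw [h1, show x0 + ε - x0 = ε by ring]
    rw [integral_one_div]
    · intro hmem
      rw [Set.mem_uIcc] at hmem
      rcases hmem with ⟨h, _⟩ | ⟨_, h⟩
      · linarith
      · linarith

lemma trunc_left (r : Polynomial ℝ) (ε : ℝ) (hε : 0 < ε) (hε2 : ε < x0 - a (2 * j0)) :
    IntervalIntegrable (fr l a x0 r) MeasureTheory.volume (a (2 * j0)) (x0 - ε)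
    ∧ ∫ ξ in (a (2 * j0))..(x0 - ε), fr l a x0 r ξ
      = (∫ ξ in (a (2 * j0))..(x0 - ε), gg l a x0 r ξ)
        + (r.eval x0 * bb l a x0) * Real.log (ε / (x0 - a (2 * j0))) := by
  have hcd : a (2 * j0) < a (2 * j0 + 1) := ha (2 * j0) (by omega) (by omega)
  have hc : a (2 * j0) < x0 - ε := by linarith
  have hgg : IntervalIntegrable (gg l a x0 r) MeasureTheory.volume (a (2 * j0)) (x0 - ε) := by
    apply (gg_int l a j0 x0 ha hl hj01 hj02 hx0 r).mono_set'
    rw [Set.uIoc_of_le hc.le, Set.uIoc_of_le hcd.le]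
    exact Set.Ioc_subset_Ioc le_rfl (by linarith [hx0.2])
  obtain ⟨hint1, hval1⟩ := oneDiv_int_left (a:=a) (j0:=j0) (x0:=x0) (k:=(r.eval x0 * bb l a x0)) (ε:=ε) hε hε2
  have heq : Set.EqOn (fr l a x0 r)
      (fun ξ => gg l a x0 r ξ + (r.eval x0 * bb l a x0) * (1 / (ξ - x0)))
      (Set.uIcc (a (2 * j0)) (x0 - ε)) := by
    intro ξ hξ
    rw [Set.uIcc_of_le hc.le] at hξ
    exact fr_decomp l a x0 r ξ (by have := hξ.2; intro hcon; subst hcon; linarith)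
  constructor
  · apply (hgg.add hint1).congr
    intro ξ hξ
    exact (heq (Set.uIoc_subset_uIcc hξ)).symm
  · rw [intervalIntegral.integral_congr heq, intervalIntegral.integral_add hgg hint1,
      intervalIntegral.integral_const_mul, hval1]

lemma trunc_right (r : Polynomial ℝ) (ε : ℝ) (hε : 0 < ε) (hε2 : ε < a (2 * j0 + 1) - x0) :
    IntervalIntegrable (fr l a x0 r) MeasureTheory.volume (x0 + ε) (a (2 * j0 + 1))
    ∧ ∫ ξ in (x0 + ε)..(a (2 * j0 + 1)), fr l a x0 r ξ
      = (∫ ξ in (x0 + ε)..(a (2 * j0 + 1)), gg l a x0 r ξ)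
        + (r.eval x0 * bb l a x0) * Real.log ((a (2 * j0 + 1) - x0) / ε) := by
  have hcd : a (2 * j0) < a (2 * j0 + 1) := ha (2 * j0) (by omega) (by omega)
  have hc : x0 + ε < a (2 * j0 + 1) := by linarith
  have hgg : IntervalIntegrable (gg l a x0 r) MeasureTheory.volume (x0 + ε) (a (2 * j0 + 1)) := by
    apply (gg_int l a j0 x0 ha hl hj01 hj02 hx0 r).mono_set'
    rw [Set.uIoc_of_le hc.le, Set.uIoc_of_le hcd.le]
    exact Set.Ioc_subset_Ioc (by linarith [hx0.1]) le_rfl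
  obtain ⟨hint1, hval1⟩ := oneDiv_int_right (a:=a) (j0:=j0) (x0:=x0) (k:=(r.eval x0 * bb l a x0)) (ε:=ε) hε hε2
  have heq : Set.EqOn (fr l a x0 r)
      (fun ξ => gg l a x0 r ξ + (r.eval x0 * bb l a x0) * (1 / (ξ - x0)))
      (Set.uIcc (x0 + ε) (a (2 * j0 + 1))) := by
    intro ξ hξ
    rw [Set.uIcc_of_le hc.le] at hξ
    exact fr_decomp l a x0 r ξ (by have := hξ.1; intro hcon; subst hcon; linarith)
  constructor
  · apply (hgg.add hint1).congr
    intro ξ hξ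
    exact (heq (Set.uIoc_subset_uIcc hξ)).symm
  · rw [intervalIntegral.integral_congr heq, intervalIntegral.integral_add hgg hint1,
      intervalIntegral.integral_const_mul, hval1]

lemma tendsto_Ff (r : Polynomial ℝ) :
    Tendsto (Ff l a j0 x0 r) (nhdsWithin 0 (Set.Ioi 0)) (nhds (Phi l a j0 x0 r)) := by
  have hcd : a (2 * j0) < a (2 * j0 + 1) := ha (2 * j0) (by omega) (by omega)
  have hx1 := hx0.1
  have hx2 := hx0.2
  set c := a (2 * j0) with hcdef
  set d := a (2 * j0 + 1) with hddef
  set δ := min (x0 - c) (d - x0) with hδdef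
  have hδ : 0 < δ := lt_min (by linarith) (by linarith)
  set k := r.eval x0 * bb l a x0 with hkdef
  set B : ℝ → ℝ := fun t => ∫ ξ in c..t, gg l a x0 r ξ with hBdef
  have hBcont : ContinuousOn B (Set.uIcc c d) :=
    intervalIntegral.continuousOn_primitive_interval'
      (gg_int l a j0 x0 ha hl hj01 hj02 hx0 r) Set.left_mem_uIcc
  have hx0mem : x0 ∈ Set.uIcc c d := by
    rw [Set.uIcc_of_le hcd.le]
    exact ⟨hx1.le, hx2.le⟩
  have hIoo : Set.Ioo (0:ℝ) δ ∈ nhdsWithin (0:ℝ) (Set.Ioi 0) :=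
    Ioo_mem_nhdsGT hδ
  have htendL : Tendsto (fun ε => B (x0 - ε)) (nhdsWithin 0 (Set.Ioi 0)) (nhds (B x0)) := by
    apply (hBcont x0 hx0mem).tendsto.comp
    rw [tendsto_nhdsWithin_iff]
    constructor
    · have h0 : Tendsto (fun ε : ℝ => x0 - ε) (nhds 0) (nhds (x0 - 0)) :=
        (continuous_const.sub continuous_id).tendsto 0
      rw [sub_zero] at h0
      exact h0.mono_left nhdsWithin_le_nhds
    · filter_upwards [hIoo] with ε hε
      rw [Set.uIcc_of_le hcd.le]
      constructor
      · have := hε.2; have := min_le_left (x0 - c) (d - x0); linarith [hδdef]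
      · have := hε.1; linarith
  have htendR : Tendsto (fun ε => B (x0 + ε)) (nhdsWithin 0 (Set.Ioi 0)) (nhds (B x0)) := by
    apply (hBcont x0 hx0mem).tendsto.comp
    rw [tendsto_nhdsWithin_iff]
    constructor
    · have h0 : Tendsto (fun ε : ℝ => x0 + ε) (nhds 0) (nhds (x0 + 0)) :=
        (continuous_const.add continuous_id).tendsto 0
      rw [add_zero] at h0
      exact h0.mono_left nhdsWithin_le_nhds
    · filter_upwards [hIoo] with ε hε
      rw [Set.uIcc_of_le hcd.le]
      constructor
      · have := hε.1; linarith
      · have := hε.2; have := min_le_right (x0 - c) (d - x0); linarith [hδdef]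
  have hevent : Ff l a j0 x0 r =ᶠ[nhdsWithin 0 (Set.Ioi 0)]
      fun ε => B (x0 - ε) + (B d - B (x0 + ε)) + k * L0 a j0 x0 := by
    filter_upwards [hIoo] with ε hε
    have hε1 := hε.1
    have hεL : ε < x0 - c := lt_of_lt_of_le hε.2 (min_le_left _ _)
    have hεR : ε < d - x0 := lt_of_lt_of_le hε.2 (min_le_right _ _)
    have hL := (trunc_left l a j0 x0 ha hl hj01 hj02 hx0 r ε hε1 hεL).2
    have hR := (trunc_right l a j0 x0 ha hl hj01 hj02 hx0 r ε hε1 hεR).2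
    rw [← hcdef, ← hkdef] at hL
    rw [← hddef, ← hkdef] at hR
    have hadj : (∫ ξ in (x0 + ε)..d, gg l a x0 r ξ) = B d - B (x0 + ε) := by
      have h1 : IntervalIntegrable (gg l a x0 r) MeasureTheory.volume c (x0 + ε) := by
        apply (gg_int l a j0 x0 ha hl hj01 hj02 hx0 r).mono_set'
        rw [Set.uIoc_of_le (by linarith : c ≤ x0 + ε), Set.uIoc_of_le hcd.le]
        exact Set.Ioc_subset_Ioc le_rfl (by linarith)
      have h2 : IntervalIntegrable (gg l a x0 r) MeasureTheory.volume (x0 + ε) d := by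
        apply (gg_int l a j0 x0 ha hl hj01 hj02 hx0 r).mono_set'
        rw [Set.uIoc_of_le (by linarith : x0 + ε ≤ d), Set.uIoc_of_le hcd.le]
        exact Set.Ioc_subset_Ioc (by linarith) le_rfl
      have := intervalIntegral.integral_add_adjacent_intervals h1 h2
      rw [hBdef]
      simp only
      linarith [this]
    have hlog : k * Real.log (ε / (x0 - c)) + k * Real.log ((d - x0) / ε)
        = k * L0 a j0 x0 := by
      rw [← mul_add]
      congr 1
      rw [Real.log_div (by linarith : ε ≠ 0) (by intro h; rw [sub_eq_zero] at h; subst h; linarith : x0 - c ≠ 0)]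
      rw [Real.log_div (by intro h; rw [sub_eq_zero] at h; subst h; linarith : d - x0 ≠ 0) (by linarith : ε ≠ 0)]
      rw [L0, Real.log_div (by intro h; rw [sub_eq_zero] at h; subst h; linarith : d - x0 ≠ 0)
        (by intro h; rw [sub_eq_zero] at h; subst h; linarith : x0 - c ≠ 0)]
      ring
    show (∫ ξ in c..(x0 - ε), fr l a x0 r ξ) + ∫ ξ in (x0 + ε)..d, fr l a x0 r ξ = _
    rw [hL, hR, hadj]
    rw [hBdef]
    simp only
    linarith [hlog]
  have hPhi : Phi l a j0 x0 r = B x0 + (B d - B x0) + k * L0 a j0 x0 := by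
    rw [Phi, hBdef]
    simp only
    ring
  rw [hPhi]
  exact Tendsto.congr' hevent.symm ((htendL.add (tendsto_const_nhds.sub htendR)).add
    tendsto_const_nhds)

lemma Ff_smul (k : ℝ) (r : Polynomial ℝ) : Ff l a j0 x0 (k • r) = fun ε => k * Ff l a j0 x0 r ε := by
  funext ε
  unfold Ff
  have h1 : ∀ (p q : ℝ), (∫ ξ in p..q, fr l a x0 (k • r) ξ) = k * ∫ ξ in p..q, fr l a x0 r ξ := by
    intro p q
    rw [← intervalIntegral.integral_const_mul]
    congr 1
    funext ξ
    exact fr_smul l a x0 k r ξ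
  rw [h1, h1]
  ring

lemma Phi_smul (k : ℝ) (r : Polynomial ℝ) : Phi l a j0 x0 (k • r) = k * Phi l a j0 x0 r := by
  have h1 := tendsto_Ff l a j0 x0 ha hl hj01 hj02 hx0 (k • r)
  rw [Ff_smul l a j0 x0 ha hl hj01 hj02 hx0 k r] at h1
  have h2 := (tendsto_Ff l a j0 x0 ha hl hj01 hj02 hx0 r).const_mul k
  exact tendsto_nhds_unique h1 h2

lemma Ff_add_event (r s : Polynomial ℝ) :
    Ff l a j0 x0 (r + s) =ᶠ[nhdsWithin 0 (Set.Ioi 0)]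
      fun ε => Ff l a j0 x0 r ε + Ff l a j0 x0 s ε := by
  have hcd : a (2 * j0) < a (2 * j0 + 1) := ha (2 * j0) (by omega) (by omega)
  have hx1 := hx0.1
  have hx2 := hx0.2
  set δ := min (x0 - a (2 * j0)) (a (2 * j0 + 1) - x0) with hδdef
  have hδ : 0 < δ := lt_min (by linarith) (by linarith)
  filter_upwards [Ioo_mem_nhdsGT hδ] with ε hε
  have hε1 := hε.1
  have hεL : ε < x0 - a (2 * j0) := lt_of_lt_of_le hε.2 (min_le_left _ _)
  have hεR : ε < a (2 * j0 + 1) - x0 := lt_of_lt_of_le hε.2 (min_le_right _ _)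
  have heq : (fun ξ => fr l a x0 (r + s) ξ) = fun ξ => fr l a x0 r ξ + fr l a x0 s ξ := by
    funext ξ; exact fr_add l a x0 r s ξ
  unfold Ff
  rw [heq, intervalIntegral.integral_add (trunc_left l a j0 x0 ha hl hj01 hj02 hx0 r ε hε1 hεL).1
      (trunc_left l a j0 x0 ha hl hj01 hj02 hx0 s ε hε1 hεL).1,
    intervalIntegral.integral_add (trunc_right l a j0 x0 ha hl hj01 hj02 hx0 r ε hε1 hεR).1
      (trunc_right l a j0 x0 ha hl hj01 hj02 hx0 s ε hε1 hεR).1]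
  ring

lemma Phi_add (r s : Polynomial ℝ) :
    Phi l a j0 x0 (r + s) = Phi l a j0 x0 r + Phi l a j0 x0 s := by
  have h1 := tendsto_Ff l a j0 x0 ha hl hj01 hj02 hx0 (r + s)
  have h2 := ((tendsto_Ff l a j0 x0 ha hl hj01 hj02 hx0 r).add
    (tendsto_Ff l a j0 x0 ha hl hj01 hj02 hx0 s)).congr'
    (Ff_add_event l a j0 x0 ha hl hj01 hj02 hx0 r s).symm
  exact tendsto_nhds_unique h1 h2

lemma x0_notin_gap (j : ℕ) (hj1 : 1 ≤ j) (hj2 : j ≤ l - 1) (hjne : j ≠ j0) :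
    ∀ ξ ∈ Set.Icc (a (2 * j)) (a (2 * j + 1)), ξ ≠ x0 := by
  intro ξ hξ
  rcases Nat.lt_or_ge j j0 with h | h
  · have : a (2 * j + 1) ≤ a (2 * j0) := a_mono l a ha _ _ (by omega) (by omega) (by omega)
    have := hξ.2
    have := hx0.1
    intro hcon; subst hcon; linarith
  · have hgt : j0 < j := by omega
    have : a (2 * j0 + 1) ≤ a (2 * j) := a_mono l a ha _ _ (by omega) (by omega) (by omega)
    have := hξ.1
    have := hx0.2
    intro hcon; subst hcon; linarith

lemma gap_int (j : ℕ) (hj1 : 1 ≤ j) (hj2 : j ≤ l - 1) (hjne : j ≠ j0) (r : Polynomial ℝ) :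
    IntervalIntegrable (fr l a x0 r) MeasureTheory.volume (a (2 * j)) (a (2 * j + 1)) := by
  have hnotin := x0_notin_gap l a j0 x0 ha hl hj01 hj02 hx0 j hj1 hj2 hjne
  have hcont : ContinuousOn (fun ξ => r.eval ξ / (ξ - x0))
      (Set.Icc (a (2 * j)) (a (2 * j + 1))) := by
    apply (Polynomial.continuous r).continuousOn.div
      ((continuous_id.sub continuous_const).continuousOn)
    intro ξ hξ
    exact sub_ne_zero.mpr (hnotin ξ hξ)
  obtain ⟨K, hK⟩ := (isCompact_Icc (a := a (2 * j)) (b := a (2 * j + 1))).exists_bound_of_continuousOn hcont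
  apply intH l a ha j hj1 hj2 hl _ (fr_measurable l a x0 r) K
  intro ξ hξ
  show |r.eval ξ / (ξ - x0) / Real.sqrt (Hf l a ξ)| ≤ _
  rw [abs_div, abs_of_nonneg (Real.sqrt_nonneg _)]
  exact div_le_div_of_nonneg_right (hK ξ (Set.mem_Icc_of_Ioo hξ)) (Real.sqrt_nonneg _)

omit hj01 hj02 hx0 in
lemma posint (j : ℕ) (hj1 : 1 ≤ j) (hj2 : j ≤ l - 1) (p : Polynomial ℝ)
    (hin : ∀ ξ ∈ Set.Ioo (a (2 * j)) (a (2 * j + 1)), 0 < p.eval ξ) :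
    0 < ∫ ξ in (a (2 * j))..(a (2 * j + 1)), p.eval ξ / Real.sqrt (Hf l a ξ) := by
  have hcd : a (2 * j) < a (2 * j + 1) := ha (2 * j) (by omega) (by omega)
  apply intervalIntegral.intervalIntegral_pos_of_pos_on
  · obtain ⟨K, hK⟩ := (isCompact_Icc (a := a (2 * j)) (b := a (2 * j + 1))).exists_bound_of_continuousOn
      (f := fun ξ => p.eval ξ) (Polynomial.continuous _).continuousOn
    apply intH l a ha j hj1 hj2 hl _ ?_ K
    · intro ξ hξ
      rw [abs_div, abs_of_nonneg (Real.sqrt_nonneg _)]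
      exact div_le_div_of_nonneg_right (hK ξ (Set.mem_Icc_of_Ioo hξ)) (Real.sqrt_nonneg _)
    · exact (Polynomial.continuous _).measurable.div
        ((Real.continuous_sqrt.comp (Hf_cont l a)).measurable)
  · intro ξ hξ
    exact div_pos (hin ξ hξ) (Real.sqrt_pos.mpr (Hf_pos l a ha j hj1 hj2 hl hξ))
  · exact hcd

omit hj01 hj02 hx0 in
lemma root_in_gap (j : ℕ) (hj1 : 1 ≤ j) (hj2 : j ≤ l - 1) (p : Polynomial ℝ)
    (hzero : (∫ ξ in (a (2 * j))..(a (2 * j + 1)), p.eval ξ / Real.sqrt (Hf l a ξ)) = 0) :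
    ∃ z ∈ Set.Ioo (a (2 * j)) (a (2 * j + 1)), p.eval z = 0 := by
  have hcd : a (2 * j) < a (2 * j + 1) := ha (2 * j) (by omega) (by omega)
  by_contra hno
  push_neg at hno
  set m := (a (2 * j) + a (2 * j + 1)) / 2 with hm
  have hmIoo : m ∈ Set.Ioo (a (2 * j)) (a (2 * j + 1)) := ⟨by rw [hm]; linarith, by rw [hm]; linarith⟩
  have hsign : ∀ ξ ∈ Set.Ioo (a (2 * j)) (a (2 * j + 1)), p.eval ξ ≠ 0 := hno
  have hcontp : Continuous fun ξ => p.eval ξ := Polynomial.continuous p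
  rcases lt_trichotomy (p.eval m) 0 with hneg | hzero' | hpos
  · have hin : ∀ ξ ∈ Set.Ioo (a (2 * j)) (a (2 * j + 1)), 0 < (-p).eval ξ := by
      intro ξ hξ
      rw [Polynomial.eval_neg]
      rcases lt_trichotomy (p.eval ξ) 0 with h | h | h
      · linarith
      · exact absurd h (hsign ξ hξ)
      · exfalso
        have hsub : Set.uIcc m ξ ⊆ Set.Ioo (a (2 * j)) (a (2 * j + 1)) :=
          Set.ordConnected_Ioo.uIcc_subset hmIoo hξ
        have h0 : (0:ℝ) ∈ Set.uIcc (p.eval m) (p.eval ξ) := by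
          rw [Set.mem_uIcc]; left; exact ⟨hneg.le, h.le⟩
        obtain ⟨z, hz, hz0⟩ := intermediate_value_uIcc hcontp.continuousOn h0
        exact hsign z (hsub hz) hz0
    have hposint := posint l a ha hl j hj1 hj2 (-p) hin
    have : (∫ ξ in (a (2 * j))..(a (2 * j + 1)), (-p).eval ξ / Real.sqrt (Hf l a ξ))
        = - ∫ ξ in (a (2 * j))..(a (2 * j + 1)), p.eval ξ / Real.sqrt (Hf l a ξ) := by
      rw [← intervalIntegral.integral_neg]
      congr 1
      funext ξ
      rw [Polynomial.eval_neg, neg_div]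
    rw [this, hzero] at hposint
    simp at hposint
  · exact hsign m hmIoo hzero'
  · have hin : ∀ ξ ∈ Set.Ioo (a (2 * j)) (a (2 * j + 1)), 0 < p.eval ξ := by
      intro ξ hξ
      rcases lt_trichotomy (p.eval ξ) 0 with h | h | h
      · exfalso
        have hsub : Set.uIcc m ξ ⊆ Set.Ioo (a (2 * j)) (a (2 * j + 1)) :=
          Set.ordConnected_Ioo.uIcc_subset hmIoo hξ
        have h0 : (0:ℝ) ∈ Set.uIcc (p.eval m) (p.eval ξ) := by
          rw [Set.mem_uIcc]; right; exact ⟨h.le, hpos.le⟩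
        obtain ⟨z, hz, hz0⟩ := intermediate_value_uIcc hcontp.continuousOn h0
        exact hsign z (hsub hz) hz0
      · exact absurd h (hsign ξ hξ)
      · exact h
    have hposint := posint l a ha hl j hj1 hj2 p hin
    rw [hzero] at hposint
    simp at hposint

/-- the key injectivity statement -/
lemma inj_lemma (p : Polynomial ℝ) (hdeg : p.degree < l)
    (h0 : p.eval x0 = 0)
    (hgaps : ∀ j, 1 ≤ j → j ≤ l - 1 → j ≠ j0 →
      (∫ ξ in (a (2 * j))..(a (2 * j + 1)), fr l a x0 p ξ) = 0)
    (hPhi : Phi l a j0 x0 p = 0) : p = 0 := by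
  set q := qr x0 p with hqdef
  by_cases hq0 : q = 0
  · -- then p is constant; p.eval x0 = 0 gives p = 0
    have hmonic : (X - Polynomial.C x0).Monic := Polynomial.monic_X_sub_C x0
    have h := Polynomial.modByMonic_add_div p (X - Polynomial.C x0)
    rw [Polynomial.modByMonic_X_sub_C_eq_C_eval, h0, map_zero, zero_add] at h
    rw [← h]
    have hqq : p /ₘ (X - Polynomial.C x0) = q := rfl
    rw [hqq, hq0, mul_zero]
  · -- q has degree < l - 1 but l - 1 roots
    have hmonic : (X - Polynomial.C x0).Monic := Polynomial.monic_X_sub_C x0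
    have hfac : p = (X - Polynomial.C x0) * q := by
      have h := Polynomial.modByMonic_add_div p (X - Polynomial.C x0)
      rw [Polynomial.modByMonic_X_sub_C_eq_C_eval, h0, map_zero, zero_add] at h
      exact h.symm
    have hpne : p ≠ 0 := by
      rw [hfac]
      exact mul_ne_zero (Polynomial.X_sub_C_ne_zero x0) hq0
    have hqdeg : q.natDegree < l - 1 := by
      have h1 : p.natDegree < l := (Polynomial.natDegree_lt_iff_degree_lt hpne).mpr hdeg
      have h2 : p.natDegree = 1 + q.natDegree := by
        rw [hfac, Polynomial.natDegree_mul (Polynomial.X_sub_C_ne_zero x0) hq0,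
          Polynomial.natDegree_X_sub_C]
      omega
    -- each gap gives a root of q
    have hqgap : ∀ j, 1 ≤ j → j ≤ l - 1 →
        (∫ ξ in (a (2 * j))..(a (2 * j + 1)), q.eval ξ / Real.sqrt (Hf l a ξ)) = 0 := by
      intro j hj1 hj2
      by_cases hjne : j = j0
      · subst hjne
        rw [← hPhi, Phi, h0, zero_mul, zero_mul, add_zero]
        congr 1
        funext ξ
        rw [gg, h0, zero_mul, add_zero]
      · rw [← hgaps j hj1 hj2 hjne]
        apply intervalIntegral.integral_congr
        intro ξ hξ
        have hcd : a (2 * j) < a (2 * j + 1) := ha (2 * j) (by omega) (by omega)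
        rw [Set.uIcc_of_le hcd.le] at hξ
        have hne : ξ ≠ x0 := x0_notin_gap l a j0 x0 ha hl hj01 hj02 hx0 j hj1 hj2 hjne ξ hξ
        have hu : ξ - x0 ≠ 0 := sub_ne_zero.mpr hne
        show q.eval ξ / Real.sqrt (Hf l a ξ) = p.eval ξ / (ξ - x0) / Real.sqrt (Hf l a ξ)
        rw [qr_eval x0 p ξ, h0, add_zero, mul_div_cancel_left₀ _ hu]
    have hz : ∀ j : ℕ, ∃ z : ℝ, 1 ≤ j → j ≤ l - 1 →
        z ∈ Set.Ioo (a (2 * j)) (a (2 * j + 1)) ∧ q.eval z = 0 := by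
      intro j
      by_cases hj : 1 ≤ j ∧ j ≤ l - 1
      · obtain ⟨z, hz1, hz2⟩ := root_in_gap l a ha hl j hj.1 hj.2 q
          (hqgap j hj.1 hj.2)
        exact ⟨z, fun _ _ => ⟨hz1, hz2⟩⟩
      · exact ⟨0, fun h1 h2 => absurd ⟨h1, h2⟩ hj⟩
    choose z hzprop using hz
    have hinj : Set.InjOn z (Finset.Icc 1 (l - 1)) := by
      intro j hj j' hj' heq
      rw [Finset.coe_Icc, Set.mem_Icc] at hj hj'
      by_contra hne
      rcases Nat.lt_or_ge j j' with hlt | hge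
      · have h1 := (hzprop j hj.1 hj.2).1
        have h2 := (hzprop j' hj'.1 hj'.2).1
        have : a (2 * j + 1) ≤ a (2 * j') := a_mono l a ha _ _ (by omega) (by omega) (by omega)
        have := h1.2; have := h2.1
        rw [heq] at *
        linarith
      · have hlt : j' < j := by omega
        have h1 := (hzprop j hj.1 hj.2).1
        have h2 := (hzprop j' hj'.1 hj'.2).1
        have : a (2 * j' + 1) ≤ a (2 * j) := a_mono l a ha _ _ (by omega) (by omega) (by omega)
        have := h1.1; have := h2.2
        rw [heq] at *
        linarith
    have hqz : q = 0 := by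
      apply Polynomial.eq_zero_of_natDegree_lt_card_of_eval_eq_zero' q
        ((Finset.Icc 1 (l - 1)).image z)
      · intro y hy
        rw [Finset.mem_image] at hy
        obtain ⟨j, hj, rfl⟩ := hy
        rw [Finset.mem_Icc] at hj
        exact (hzprop j hj.1 hj.2).2
      · rw [Finset.card_image_of_injOn hinj, Nat.card_Icc]
        omega
    exact absurd hqz hq0

end PV

end
end RX0
end Aux

theorem r_x0_exists_unique
    (l : ℕ) (hl : 1 ≤ l) (a : ℕ → ℝ)
    (ha : ∀ i, 1 ≤ i → i < 2 * l → a i < a (i + 1))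
    (j0 : ℕ) (hj0 : j0 ∈ Finset.Icc 1 (l - 1))
    (x0 : ℝ) (hx0 : x0 ∈ Set.Ioo (a (2 * j0)) (a (2 * j0 + 1))) :
    ∃! r : Polynomial ℝ, r.natDegree ≤ l - 1 ∧
      r.eval x0 = - Real.sqrt (∏ i ∈ Finset.Icc 1 (2 * l), (x0 - a i)) ∧
      (∀ j ∈ Finset.Icc 1 (l - 1), j ≠ j0 →
        ∫ ξ in (a (2 * j))..(a (2 * j + 1)),
          r.eval ξ / (ξ - x0) / Real.sqrt (∏ i ∈ Finset.Icc 1 (2 * l), (ξ - a i)) = 0) ∧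
      Tendsto (fun ε : ℝ =>
          (∫ ξ in (a (2 * j0))..(x0 - ε),
            r.eval ξ / (ξ - x0) / Real.sqrt (∏ i ∈ Finset.Icc 1 (2 * l), (ξ - a i))) +
          ∫ ξ in (x0 + ε)..(a (2 * j0 + 1)),
            r.eval ξ / (ξ - x0) / Real.sqrt (∏ i ∈ Finset.Icc 1 (2 * l), (ξ - a i)))
        (nhdsWithin 0 (Set.Ioi 0)) (nhds 0) := by
  classical
  rw [Finset.mem_Icc] at hj0
  obtain ⟨hj01, hj02⟩ := hj0
  -- the functionals
  set ψ : ℕ → Polynomial ℝ → ℝ := fun j r =>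
    if j = 0 then r.eval x0 else if j = j0 then RX0.Phi l a j0 x0 r
    else ∫ ξ in (a (2 * j))..(a (2 * j + 1)), RX0.fr l a x0 r ξ with hψdef
  have hψ_add : ∀ j : ℕ, j < l → ∀ r s : Polynomial ℝ,
      ψ j (r + s) = ψ j r + ψ j s := by
    intro j hj r s
    by_cases h0 : j = 0
    · simp only [hψdef, h0, if_pos rfl, Polynomial.eval_add]
    · by_cases hj0' : j = j0
      · simp only [hψdef, if_neg h0, if_pos hj0']
        exact RX0.Phi_add l a j0 x0 ha hl hj01 hj02 hx0 r s
      · simp only [hψdef, if_neg h0, if_neg hj0']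
        have hj1 : 1 ≤ j := by omega
        have hj2 : j ≤ l - 1 := by omega
        have h1 := RX0.gap_int l a j0 x0 ha hl hj01 hj02 hx0 j hj1 hj2 hj0' r
        have h2 := RX0.gap_int l a j0 x0 ha hl hj01 hj02 hx0 j hj1 hj2 hj0' s
        calc (∫ ξ in (a (2 * j))..(a (2 * j + 1)), RX0.fr l a x0 (r + s) ξ)
            = ∫ ξ in (a (2 * j))..(a (2 * j + 1)),
                (RX0.fr l a x0 r ξ + RX0.fr l a x0 s ξ) := by
              congr 1
              funext ξ
              exact RX0.fr_add l a x0 r s ξ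
          _ = _ := intervalIntegral.integral_add h1 h2
  have hψ_smul : ∀ j : ℕ, j < l → ∀ (k : ℝ) (r : Polynomial ℝ),
      ψ j (k • r) = k * ψ j r := by
    intro j hj k r
    by_cases h0 : j = 0
    · simp only [hψdef, h0, if_pos rfl, Polynomial.eval_smul, smul_eq_mul]
    · by_cases hj0' : j = j0
      · simp only [hψdef, if_neg h0, if_pos hj0']
        exact RX0.Phi_smul l a j0 x0 ha hl hj01 hj02 hx0 k r
      · simp only [hψdef, if_neg h0, if_neg hj0']
        calc (∫ ξ in (a (2 * j))..(a (2 * j + 1)), RX0.fr l a x0 (k • r) ξ)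
            = ∫ ξ in (a (2 * j))..(a (2 * j + 1)), k * RX0.fr l a x0 r ξ := by
              congr 1
              funext ξ
              exact RX0.fr_smul l a x0 k r ξ
          _ = _ := intervalIntegral.integral_const_mul _ _
  -- the linear map
  set T : Polynomial.degreeLT ℝ l →ₗ[ℝ] (Fin l → ℝ) :=
    { toFun := fun p i => ψ i.val p.val
      map_add' := by
        intro p q
        funext i
        show ψ i.val ((p : Polynomial ℝ) + (q : Polynomial ℝ)) = _
        rw [hψ_add i.val i.isLt]
        rfl
      map_smul' := by
        intro k p
        funext i
        show ψ i.val (k • (p : Polynomial ℝ)) = _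
        rw [hψ_smul i.val i.isLt]
        rfl } with hTdef
  have hinj : Function.Injective T := by
    rw [injective_iff_map_eq_zero]
    intro p hp
    have hdeg : (p : Polynomial ℝ).degree < l := Polynomial.mem_degreeLT.mp p.2
    have hcomp : ∀ j : ℕ, (hj : j < l) → ψ j (p : Polynomial ℝ) = 0 := by
      intro j hj
      have := congrFun hp ⟨j, hj⟩
      exact this
    have h0 : (p : Polynomial ℝ).eval x0 = 0 := by
      have := hcomp 0 (by omega)
      simpa only [hψdef, if_pos rfl] using this
    have hgaps : ∀ j, 1 ≤ j → j ≤ l - 1 → j ≠ j0 →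
        (∫ ξ in (a (2 * j))..(a (2 * j + 1)), RX0.fr l a x0 (p : Polynomial ℝ) ξ) = 0 := by
      intro j hj1 hj2 hjne
      have := hcomp j (by omega)
      simpa only [hψdef, if_neg (by omega : ¬ (j = 0)), if_neg hjne] using this
    have hPhi : RX0.Phi l a j0 x0 (p : Polynomial ℝ) = 0 := by
      have := hcomp j0 (by omega)
      simpa only [hψdef, if_neg (by omega : ¬ (j0 = 0)), if_pos rfl, ↓reduceIte] using this
    have := RX0.inj_lemma l a j0 x0 ha hl hj01 hj02 hx0 (p : Polynomial ℝ) hdeg h0 hgaps hPhi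
    exact Subtype.ext this
  haveI : FiniteDimensional ℝ (Polynomial.degreeLT ℝ l) :=
    LinearEquiv.finiteDimensional (Polynomial.degreeLTEquiv ℝ l).symm
  have hfr : Module.finrank ℝ (Polynomial.degreeLT ℝ l) = Module.finrank ℝ (Fin l → ℝ) :=
    (Polynomial.degreeLTEquiv ℝ l).finrank_eq
  have hsurj : Function.Surjective T :=
    (LinearMap.injective_iff_surjective_of_finrank_eq_finrank hfr).mp hinj
  set Tv : Fin l → ℝ := fun i => if (i : ℕ) = 0
    then - Real.sqrt (RX0.Hf l a x0) else 0 with hTvdef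
  obtain ⟨p, hp⟩ := hsurj Tv
  -- helper to read off components of hp
  have hpcomp : ∀ j : ℕ, (hj : j < l) → ψ j (p : Polynomial ℝ)
      = (if j = 0 then - Real.sqrt (RX0.Hf l a x0) else 0) := by
    intro j hj
    have := congrFun hp ⟨j, hj⟩
    exact this
  refine ⟨(p : Polynomial ℝ), ⟨?_, ?_, ?_, ?_⟩, ?_⟩
  · -- degree bound
    by_cases hz : (p : Polynomial ℝ) = 0
    · rw [hz]
      simp
    · have : (p : Polynomial ℝ).natDegree < l :=
        (Polynomial.natDegree_lt_iff_degree_lt hz).mpr (Polynomial.mem_degreeLT.mp p.2)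
      omega
  · -- value at x0
    have := hpcomp 0 (by omega)
    simpa only [hψdef, if_pos rfl, ↓reduceIte, RX0.Hf] using this
  · -- gap conditions
    intro j hj hjne
    rw [Finset.mem_Icc] at hj
    have := hpcomp j (by omega)
    rw [hψdef] at this
    simp only [if_neg (by omega : ¬ (j = 0)), if_neg hjne] at this
    exact this
  · -- principal value condition
    have hPhi0 : RX0.Phi l a j0 x0 (p : Polynomial ℝ) = 0 := by
      have := hpcomp j0 (by omega)
      simpa only [hψdef, if_neg (by omega : ¬ (j0 = 0)), if_pos rfl, ↓reduceIte] using this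
    have := RX0.tendsto_Ff l a j0 x0 ha hl hj01 hj02 hx0 (p : Polynomial ℝ)
    rw [hPhi0] at this
    exact this
  · -- uniqueness
    rintro r' ⟨hdeg', heval', hgaps', hpv'⟩
    have hmem : r' ∈ Polynomial.degreeLT ℝ l := by
      rw [Polynomial.mem_degreeLT]
      calc r'.degree ≤ (r'.natDegree : WithBot ℕ) := Polynomial.degree_le_natDegree
        _ ≤ ((l - 1 : ℕ) : WithBot ℕ) := by exact_mod_cast hdeg'
        _ < (l : WithBot ℕ) := by exact_mod_cast (by omega : l - 1 < l)
    have hT' : T ⟨r', hmem⟩ = Tv := by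
      funext i
      show ψ i.val r' = Tv i
      rcases i with ⟨j, hj⟩
      simp only [hTvdef]
      by_cases h0 : j = 0
      · simp only [hψdef, if_pos h0]
        exact heval'
      · by_cases hj0' : j = j0
        · simp only [hψdef, if_neg h0, if_pos hj0']
          have h1 := RX0.tendsto_Ff l a j0 x0 ha hl hj01 hj02 hx0 r'
          exact tendsto_nhds_unique h1 hpv'
        · simp only [hψdef, if_neg h0, if_neg hj0']
          exact hgaps' j (Finset.mem_Icc.mpr ⟨by omega, by omega⟩) hj0'
    have := hinj (hT'.trans hp.symm)
    exact congrArg Subtype.val this
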